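/- Let X_n be the Class DIII Wigner-type ensemble, let m ≥ 3, and let g = τγ^ν ∈ D_{2m} be a reflection (ν ∈ {0,…,m−1}). Then lim_{n→∞} n^{−m} · Σ_{P ∈ S_n^{good}(π̂_g)} ∏_{l=1}^m E[a_n(P_{1,l})·a_n(P_{2,g(l)})] equals 0 if m is odd, and equals 2^{m+1}·σ^{2m} if m is even. -/

import Mathlib

open MeasureTheory ProbabilityTheory Matrix Filter

noncomputable section

/-- `blk d a` is index `a` in the first block row/column if `d = 0`, and in the
second block row/column otherwise (encoding `n·d + a` in `[2n]`). -/
def blk {n : ℕ} (d : ℕ) (a : Fin n) : Fin n ⊕ Fin n :=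
  if d = 0 then Sum.inl a else Sum.inr a

/-- A Δ-matrix: a `2 × 2` matrix with entries in `{0,1}` whose entries sum to an
even number. -/
def IsDelta (D : Matrix (Fin 2) (Fin 2) ℕ) : Prop :=
  (∀ i j, D i j ≤ 1) ∧ Even (D 0 0 + D 0 1 + D 1 0 + D 1 1)

/-- The (unnormalized) class DIII block matrix built from `X₁, X₂`; its `(p,q)` entry
is `a_n(p,q)`, the `(p,q)` entry of `√(2n)·X_n`. -/
def dIIIBlock {n : ℕ} (X₁ X₂ : Matrix (Fin n) (Fin n) ℂ) :
    Matrix (Fin n ⊕ Fin n) (Fin n ⊕ Fin n) ℂ :=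
  Matrix.fromBlocks X₁ X₂ X₂ (-X₁)

/-- The space `M_n^{DIII}`: block matrices `[[X₁,X₂],[X₂,−X₁]]` with `X₁, X₂`
skew-symmetric with purely imaginary entries. `[2n]` is encoded as `Fin n ⊕ Fin n`. -/
def MDIII (n : ℕ) : Set (Matrix (Fin n ⊕ Fin n) (Fin n ⊕ Fin n) ℂ) :=
  {M | ∃ X₁ X₂ : Matrix (Fin n) (Fin n) ℂ,
    (∀ a b, (X₁ a b).re = 0) ∧ (∀ a b, (X₂ a b).re = 0) ∧
    X₁ᵀ = -X₁ ∧ X₂ᵀ = -X₂ ∧ M = Matrix.fromBlocks X₁ X₂ X₂ (-X₁)}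

/-- The coordinate functional `X ↦ X_{p,q}` on `M_n^{DIII}` is nonzero. -/
def NonzeroAtDIII (n : ℕ) (P : (Fin n ⊕ Fin n) × (Fin n ⊕ Fin n)) : Prop :=
  ∃ M ∈ MDIII n, M P.1 P.2 ≠ 0

/-- `(p,q) ∼ (r,s)`: both coordinate functionals on `M_n^{DIII}` are nonzero and
equal up to sign. -/
def simDIII (n : ℕ) (P Q : (Fin n ⊕ Fin n) × (Fin n ⊕ Fin n)) : Prop :=
  NonzeroAtDIII n P ∧ NonzeroAtDIII n Q ∧
    ((∀ M ∈ MDIII n, M Q.1 Q.2 = M P.1 P.2) ∨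
      (∀ M ∈ MDIII n, M Q.1 Q.2 = -(M P.1 P.2)))

/-- A multi-index `P = (P_{i,l}) = ((p_{i,l},q_{i,l}))` is consistent if
`q_{i,l} = p_{i,l+1}` cyclically, for `i = 1, 2`. -/
def IsConsistent {n m : ℕ} [NeZero m]
    (P : Fin 2 → Fin m → ((Fin n ⊕ Fin n) × (Fin n ⊕ Fin n))) : Prop :=
  ∀ i l, (P i l).2 = (P i (l + 1)).1

/-- `P ∈ S_n^{good}(π̂_g)`: `P` is a consistent multi-index, every `P_{i,l}` lies in
the domain of `∼`, and the `∼`-relations among the `2m` index pairs are exactly those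
given by the pair partition `π̂_g = {{(1,l),(2,g(l))} : l ∈ [m]}`. -/
def SGoodDIII (n m : ℕ) [NeZero m] (g : Fin m → Fin m)
    (P : Fin 2 → Fin m → ((Fin n ⊕ Fin n) × (Fin n ⊕ Fin n))) : Prop :=
  IsConsistent P ∧ (∀ i l, NonzeroAtDIII n (P i l)) ∧
    ∀ i l i' l', simDIII n (P i l) (P i' l') ↔
      ((i = i' ∧ l = l') ∨ (i = 0 ∧ i' = 1 ∧ l' = g l) ∨ (i = 1 ∧ i' = 0 ∧ l = g l'))

namespace Stmt16Aux

variable {n : ℕ}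

def idx : Fin n ⊕ Fin n → Fin n := Sum.elim id id
def blkb : Fin n ⊕ Fin n → Bool := Sum.elim (fun _ => false) (fun _ => true)
def cb (b : Bool) (x : Fin n) : Fin n ⊕ Fin n := if b then .inr x else .inl x

@[simp] lemma idx_cb (b : Bool) (x : Fin n) : idx (cb b x) = x := by
  cases b <;> rfl

@[simp] lemma blkb_cb (b : Bool) (x : Fin n) : blkb (cb b x) = b := by
  cases b <;> rfl

@[simp] lemma cb_blkb_idx (p : Fin n ⊕ Fin n) : cb (blkb p) (idx p) = p := by
  cases p <;> rfl

lemma cb_injective2 {b b' : Bool} {x x' : Fin n} (h : cb b x = cb b' x') :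
    b = b' ∧ x = x' := by
  constructor
  · have := congrArg blkb h; simpa using this
  · have := congrArg idx h; simpa using this

/-- sign of entry as function of the two block bits -/
def sg (u v : Bool) : ℂ := if u && v then -1 else 1

/-- which of `X₁, X₂` the entry reads, as function of the two block bits -/
def xb (u v : Bool) : Fin 2 := if u = v then 0 else 1

def sgn (p q : Fin n ⊕ Fin n) : ℂ := sg (blkb p) (blkb q)
def xi (p q : Fin n ⊕ Fin n) : Fin 2 := xb (blkb p) (blkb q)

lemma sg_sq (u v : Bool) : sg u v * sg u v = 1 := by
  unfold sg; split <;> norm_num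

lemma sg_ne (u v : Bool) : sg u v ≠ 0 := by
  unfold sg; split <;> norm_num

lemma norm_sg (u v : Bool) : ‖sg u v‖ = 1 := by
  unfold sg; split <;> simp

lemma entry_eq (Y : Fin 2 → Matrix (Fin n) (Fin n) ℂ) (p q : Fin n ⊕ Fin n) :
    Matrix.fromBlocks (Y 0) (Y 1) (Y 1) (-(Y 0)) p q
      = sgn p q * Y (xi p q) (idx p) (idx q) := by
  cases p <;> cases q <;>
    simp [Matrix.fromBlocks, sgn, xi, sg, xb, blkb, idx]

end Stmt16Aux
namespace Stmt16Aux

variable {n : ℕ}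

/-- elementary purely-imaginary skew-symmetric matrix -/
def elS (a b : Fin n) : Matrix (Fin n) (Fin n) ℂ :=
  Matrix.of fun c d => if c = a ∧ d = b then Complex.I
    else if c = b ∧ d = a then -Complex.I else 0

lemma elS_re (a b c d : Fin n) : ((elS a b) c d).re = 0 := by
  simp only [elS, Matrix.of_apply]
  split
  · simp
  · split <;> simp

lemma elS_skew {a b : Fin n} (hab : a ≠ b) : (elS a b)ᵀ = -(elS a b) := by
  ext c d
  simp only [elS, Matrix.transpose_apply, Matrix.neg_apply, Matrix.of_apply]
  by_cases h1 : c = a <;> by_cases h2 : d = b <;> by_cases h3 : c = b <;>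
    by_cases h4 : d = a <;> simp_all
lemma elS_apply_ab (a b : Fin n) (hab : a ≠ b) : elS a b a b = Complex.I := by
  simp [elS, hab, Ne.symm hab]

lemma elS_apply_ne {a b c d : Fin n}
    (h1 : ¬(c = a ∧ d = b)) (h2 : ¬(c = b ∧ d = a)) : elS a b c d = 0 := by
  simp only [elS, Matrix.of_apply]
  rw [if_neg h1, if_neg h2]

/-- blocks of the test matrix -/
def tY (i : Fin 2) (a b : Fin n) : Fin 2 → Matrix (Fin n) (Fin n) ℂ :=
  fun j => if j = i then elS a b else 0

/-- test element of MDIII with `X_i = elS a b`, the other block 0. -/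
def testM (i : Fin 2) (a b : Fin n) : Matrix (Fin n ⊕ Fin n) (Fin n ⊕ Fin n) ℂ :=
  Matrix.fromBlocks (tY i a b 0) (tY i a b 1) (tY i a b 1) (-(tY i a b 0))

lemma testM_mem (i : Fin 2) {a b : Fin n} (hab : a ≠ b) : testM i a b ∈ MDIII n := by
  refine ⟨_, _, ?_, ?_, ?_, ?_, rfl⟩
  · intro c d; unfold tY; split <;> simp [elS_re]
  · intro c d; unfold tY; split <;> simp [elS_re]
  · unfold tY; split <;> simp [elS_skew hab]
  · unfold tY; split <;> simp [elS_skew hab]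

lemma testM_apply (i : Fin 2) (a b : Fin n) (p q : Fin n ⊕ Fin n) :
    testM i a b p q = sgn p q * (if xi p q = i then elS a b (idx p) (idx q) else 0) := by
  have h := entry_eq (tY i a b) p q
  unfold testM
  rw [h]; unfold tY
  split <;> simp

/-- general member entry formula -/
lemma mem_entry {M : Matrix (Fin n ⊕ Fin n) (Fin n ⊕ Fin n) ℂ} (hM : M ∈ MDIII n) :
    ∃ Y : Fin 2 → Matrix (Fin n) (Fin n) ℂ,
      (∀ j c d, (Y j) c d = -((Y j) d c)) ∧
      (∀ p q, M p q = sgn p q * Y (xi p q) (idx p) (idx q)) := by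
  obtain ⟨X₁, X₂, h1, h2, h3, h4, rfl⟩ := hM
  refine ⟨fun j => if j = 0 then X₁ else X₂, ?_, ?_⟩
  · intro j c d
    fin_cases j
    · simpa using congrFun (congrFun h3 d) c
    · simpa using congrFun (congrFun h4 d) c
  · intro p q
    have := entry_eq (fun j => if j = 0 then X₁ else X₂) p q
    simpa using this

lemma skew_diag {Y : Matrix (Fin n) (Fin n) ℂ} (h : ∀ c d, Y c d = -(Y d c))
    (a : Fin n) : Y a a = 0 := by
  have := h a a
  linear_combination this / 2

end Stmt16Aux
namespace Stmt16Aux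

variable {n : ℕ}

lemma sgn_cases (p q : Fin n ⊕ Fin n) : sgn p q = 1 ∨ sgn p q = -1 := by
  unfold sgn sg; split
  · right; rfl
  · left; rfl

lemma nonzero_iff (P : (Fin n ⊕ Fin n) × (Fin n ⊕ Fin n)) :
    NonzeroAtDIII n P ↔ idx P.1 ≠ idx P.2 := by
  constructor
  · rintro ⟨M, hM, hne⟩ h
    obtain ⟨Y, hskewY, hent⟩ := mem_entry hM
    rw [hent P.1 P.2, h] at hne
    rw [skew_diag (hskewY _), mul_zero] at hne
    exact hne rfl
  · intro h
    refine ⟨testM (xi P.1 P.2) (idx P.1) (idx P.2), testM_mem _ h, ?_⟩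
    rw [testM_apply, if_pos rfl, elS_apply_ab _ _ h]
    exact mul_ne_zero (sg_ne _ _) Complex.I_ne_zero

lemma sim_iff (P Q : (Fin n ⊕ Fin n) × (Fin n ⊕ Fin n)) :
    simDIII n P Q ↔ idx P.1 ≠ idx P.2 ∧ xi Q.1 Q.2 = xi P.1 P.2 ∧
      ((idx Q.1 = idx P.1 ∧ idx Q.2 = idx P.2) ∨
        (idx Q.1 = idx P.2 ∧ idx Q.2 = idx P.1)) := by
  constructor
  · rintro ⟨hP, hQ, hpm⟩
    have hab : idx P.1 ≠ idx P.2 := (nonzero_iff P).1 hP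
    refine ⟨hab, ?_⟩
    have hMne : testM (xi P.1 P.2) (idx P.1) (idx P.2) Q.1 Q.2 ≠ 0 := by
      have hPne : testM (xi P.1 P.2) (idx P.1) (idx P.2) P.1 P.2 ≠ 0 := by
        rw [testM_apply, if_pos rfl, elS_apply_ab _ _ hab]
        exact mul_ne_zero (sg_ne _ _) Complex.I_ne_zero
      rcases hpm with h | h
      · rw [h _ (testM_mem _ hab)]; exact hPne
      · rw [h _ (testM_mem _ hab)]; simpa using hPne
    rw [testM_apply] at hMne
    by_cases hxi : xi Q.1 Q.2 = xi P.1 P.2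
    · refine ⟨hxi, ?_⟩
      rw [if_pos hxi] at hMne
      by_contra hcon
      rw [not_or] at hcon
      rw [elS_apply_ne hcon.1 hcon.2, mul_zero] at hMne
      exact hMne rfl
    · rw [if_neg hxi, mul_zero] at hMne
      exact (hMne rfl).elim
  · rintro ⟨hab, hxi, hor⟩
    have hcd : idx Q.1 ≠ idx Q.2 := by
      rcases hor with ⟨h1, h2⟩ | ⟨h1, h2⟩
      · rw [h1, h2]; exact hab
      · rw [h1, h2]; exact hab.symm
    refine ⟨(nonzero_iff P).2 hab, (nonzero_iff Q).2 hcd, ?_⟩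
    set ε : ℂ := sgn Q.1 Q.2 * sgn P.1 P.2 * (if idx Q.1 = idx P.1 then 1 else -1) with hε
    have key : ∀ M ∈ MDIII n, M Q.1 Q.2 = ε * M P.1 P.2 := by
      intro M hM
      obtain ⟨Y, hskewY, hent⟩ := mem_entry hM
      rw [hent P.1 P.2, hent Q.1 Q.2, hxi]
      have hsq : sgn P.1 P.2 * sgn P.1 P.2 = 1 := sg_sq _ _
      rcases hor with ⟨h1, h2⟩ | ⟨h1, h2⟩
      · rw [h1, h2, hε, if_pos h1]
        rcases sgn_cases P.1 P.2 with hp | hp <;> rw [hp] <;> ring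
      · have hne : ¬ idx Q.1 = idx P.1 := fun hh => hab (by rw [← hh, h1])
        rw [h1, h2, hε, if_neg hne,
          show Y (xi P.1 P.2) (idx P.2) (idx P.1)
            = -(Y (xi P.1 P.2) (idx P.1) (idx P.2)) from hskewY _ _ _]
        rcases sgn_cases P.1 P.2 with hp | hp <;> rw [hp] <;> ring
    have hεval : ε = 1 ∨ ε = -1 := by
      rw [hε]
      rcases sgn_cases Q.1 Q.2 with h1 | h1 <;> rcases sgn_cases P.1 P.2 with h2 | h2 <;>
        rw [h1, h2] <;> by_cases h3 : idx Q.1 = idx P.1 <;>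
          simp [h3]
    rcases hεval with hv | hv
    · left; intro M hM; rw [key M hM, hv, one_mul]
    · right; intro M hM; rw [key M hM, hv]; ring

end Stmt16Aux
namespace Stmt16Aux

open scoped Fin.CommRing Fin.NatCast

variable {m : ℕ} [NeZero m]

lemma fin_cycle_induction (p : Fin m → Prop) (h0 : p 0)
    (hs : ∀ l, p l → p (l + 1)) : ∀ l, p l := by
  have key : ∀ j : ℕ, p ((j : Fin m)) := by
    intro j
    induction j with
    | zero => simpa using h0
    | succ j ih =>
      have := hs _ ih
      convert this using 2
      push_cast
      ring
  intro l
  have := key l.val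
  simpa [Fin.cast_val_eq_self] using this

lemma fin_one_ne_zero' (hm : 3 ≤ m) : (1 : Fin m) ≠ 0 := by
  intro h
  have h2 : ((1 : ℕ) : Fin m) = 0 := by exact_mod_cast h
  rw [Fin.natCast_eq_zero] at h2
  have := Nat.le_of_dvd (by norm_num) h2
  omega

lemma fin_two_ne_zero' (hm : 3 ≤ m) : (2 : Fin m) ≠ 0 := by
  intro h
  have h2 : ((2 : ℕ) : Fin m) = 0 := by exact_mod_cast h
  rw [Fin.natCast_eq_zero] at h2
  have := Nat.le_of_dvd (by norm_num) h2
  omega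

variable (ν : Fin m)

/-- the reflection `g = τ γ^ν` -/
def gg (l : Fin m) : Fin m := -(l + ν) - 1

/-- the companion reflection `r = g + 1` -/
def rr (l : Fin m) : Fin m := -(l + ν)

lemma gg_invol (l : Fin m) : gg ν (gg ν l) = l := by unfold gg; ring

lemma rr_invol (l : Fin m) : rr ν (rr ν l) = l := by unfold rr; ring

lemma rr_succ (l : Fin m) : rr ν (l + 1) = rr ν l - 1 := by unfold rr; ring

lemma rr_gg (l : Fin m) : rr ν (gg ν l) = l + 1 := by unfold rr gg; ring

lemma rr_gg_succ (l : Fin m) : rr ν (gg ν l + 1) = l := by unfold rr gg; ring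

lemma gg_eq_rr_sub_one (l : Fin m) : gg ν l = rr ν l - 1 := by unfold rr gg; ring

lemma gg_bijective : Function.Bijective (gg ν) :=
  Function.Involutive.bijective (gg_invol ν)

lemma rr_bijective : Function.Bijective (rr ν) :=
  Function.Involutive.bijective (rr_invol ν)

lemma sg_comm (u v : Bool) : sg u v = sg v u := by
  unfold sg; rw [Bool.and_comm]

/-- the sign attached to a cyclic `Bool` sequence -/
def SS (d : Fin m → Bool) : ℂ := ∏ l, sg (d l) (d (l + 1))

lemma prod_shift (f : Fin m → ℂ) : (∏ l, f (l + 1)) = ∏ l, f l :=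
  Fintype.prod_equiv (Equiv.addRight 1) _ _ (fun _ => rfl)

lemma SS_sq (d : Fin m → Bool) : SS d * SS d = 1 := by
  unfold SS
  rw [← Finset.prod_mul_distrib]
  rw [Finset.prod_congr rfl (fun l _ => sg_sq (d l) (d (l + 1)))]
  simp

lemma telescope (d : Fin m → Bool) :
    (∏ l, (if d l = d (l + 1) then (1 : ℂ) else -1)) = 1 := by
  have step : ∀ l : Fin m, (if d l = d (l + 1) then (1 : ℂ) else -1)
      = (if d l then (1:ℂ) else -1) * (if d (l+1) then (1:ℂ) else -1) := by
    intro l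
    cases h1 : d l <;> cases h2 : d (l + 1) <;> simp [h1, h2]
  rw [Finset.prod_congr rfl (fun l _ => step l), Finset.prod_mul_distrib,
    prod_shift (fun l => if d l then (1:ℂ) else -1), ← Finset.prod_mul_distrib]
  have : ∀ l : Fin m, (if d l then (1:ℂ) else -1) * (if d l then (1:ℂ) else -1) = 1 := by
    intro l; cases h : d l <;> simp [h]
  rw [Finset.prod_congr rfl (fun l _ => this l)]
  simp

lemma SS_mul_SS_not (d : Fin m → Bool) :
    SS d * SS (fun l => !(d l)) = (-1 : ℂ) ^ m := by
  unfold SS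
  rw [← Finset.prod_mul_distrib]
  have step : ∀ l : Fin m, sg (d l) (d (l + 1)) * sg (!(d l)) (!(d (l + 1)))
      = -1 * (if d l = d (l + 1) then (1 : ℂ) else -1) := by
    intro l
    cases h1 : d l <;> cases h2 : d (l + 1) <;> simp [h1, h2, sg]
  rw [Finset.prod_congr rfl (fun l _ => step l), Finset.prod_mul_distrib, telescope]
  simp [Finset.card_univ]

lemma SS_reindex (d : Fin m → Bool) : SS (fun k => d (rr ν k)) = SS d := by
  unfold SS
  rw [← Fintype.prod_bijective (gg ν) (gg_bijective ν) _ _ (fun l => rfl)]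
  apply Finset.prod_congr rfl
  intro l _
  simp only [rr_gg, rr_gg_succ]
  exact sg_comm _ _

/-- compatibility of the block-bit sequences -/
def Compat (d1 d2 : Fin m → Bool) : Prop :=
  ∀ l, (d1 l = d1 (l + 1)) ↔ (d2 (gg ν l) = d2 (gg ν l + 1))

instance (d1 d2 : Fin m → Bool) : Decidable (Compat ν d1 d2) := by
  unfold Compat; infer_instance

lemma compat_iff (d1 d2 : Fin m → Bool) :
    Compat ν d1 d2 ↔ (d2 = fun k => d1 (rr ν k)) ∨ (d2 = fun k => !(d1 (rr ν k))) := by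
  constructor
  · intro hc
    set h : Fin m → Bool := fun k => d1 (rr ν k) with hh
    have hpat : ∀ k, (d2 k = d2 (k + 1)) ↔ (h k = h (k + 1)) := by
      intro k
      have := hc (gg ν k)
      rw [gg_invol] at this
      have e1 : h k = d1 (gg ν k + 1) := by
        rw [hh]; simp only []
        congr 1
        rw [gg_eq_rr_sub_one]; ring
      have e2 : h (k + 1) = d1 (gg ν k) := by
        rw [hh]; simp only []
        congr 1
        rw [rr_succ, gg_eq_rr_sub_one]
      rw [e1, e2]
      rw [← this]
      constructor <;> intro hx
      · cases hy : d1 (gg ν k) <;> cases hz : d1 (gg ν k + 1) <;> simp_all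
      · cases hy : d1 (gg ν k) <;> cases hz : d1 (gg ν k + 1) <;> simp_all
    by_cases h0 : d2 0 = h 0
    · left
      funext k
      refine fin_cycle_induction (fun k => d2 k = h k) h0 ?_ k
      intro l hl
      have := hpat l
      cases ha : d2 (l+1) <;> cases hb : h (l+1) <;> simp_all
    · right
      have h0' : d2 0 = !(h 0) := by
        cases ha : d2 0 <;> cases hb : h 0 <;> simp_all
      funext k
      refine fin_cycle_induction (fun k => d2 k = !(h k)) h0' ?_ k
      intro l hl
      have := hpat l
      cases ha : d2 (l+1) <;> cases hb : h (l+1) <;> simp_all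
  · intro hd l
    rcases hd with rfl | rfl
    · simp only [rr_gg, rr_gg_succ]
      exact ⟨fun h => h.symm, fun h => h.symm⟩
    · simp only [rr_gg, rr_gg_succ]
      constructor <;> intro hx
      · rw [hx]
      · cases hy : d1 l <;> cases hz : d1 (l + 1) <;> simp_all

lemma Tsum :
    (∑ t ∈ Finset.univ.filter
        (fun t : (Fin m → Bool) × (Fin m → Bool) => Compat ν t.1 t.2),
      SS t.1 * SS t.2) = (1 + (-1 : ℂ) ^ m) * 2 ^ m := by
  rw [Finset.sum_filter, Fintype.sum_prod_type]
  have inner : ∀ d1 : Fin m → Bool,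
      (∑ d2 : Fin m → Bool, if Compat ν d1 d2 then SS d1 * SS d2 else 0)
        = 1 + (-1 : ℂ) ^ m := by
    intro d1
    have hne : (fun k => d1 (rr ν k)) ≠ (fun k => !(d1 (rr ν k))) := by
      intro h
      have := congrFun h 0
      simp at this
    have hfilter : (Finset.univ.filter fun d2 => Compat ν d1 d2)
        = {fun k => d1 (rr ν k), fun k => !(d1 (rr ν k))} := by
      ext d2
      simp [compat_iff]
    rw [← Finset.sum_filter, hfilter, Finset.sum_pair hne]
    rw [SS_reindex, show SS (fun k => !(d1 (rr ν k))) = SS (fun k => !(d1 k)) from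
      SS_reindex ν (fun k => !(d1 k)), SS_sq, SS_mul_SS_not]
  rw [Finset.sum_congr rfl (fun d1 _ => inner d1)]
  simp [Finset.card_univ]
  ring

end Stmt16Aux
namespace Stmt16Aux

open scoped Fin.CommRing Fin.NatCast

variable {n m : ℕ} [NeZero m]

lemma fin2 (i : Fin 2) : i = 0 ∨ i = 1 := by
  match i with
  | ⟨0, _⟩ => exact Or.inl rfl
  | ⟨1, _⟩ => exact Or.inr rfl

lemma succ_ne (hm : 3 ≤ m) (l : Fin m) : l ≠ l + 1 := by
  intro h
  exact fin_one_ne_zero' hm (by linear_combination -h)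

lemma two_step_ne (hm : 3 ≤ m) (l : Fin m) : l ≠ l + 2 := by
  intro h
  exact fin_two_ne_zero' hm (by linear_combination -h)

lemma sim_symm {P Q : (Fin n ⊕ Fin n) × (Fin n ⊕ Fin n)}
    (h : simDIII n P Q) : simDIII n Q P := by
  obtain ⟨hP, hQ, hor⟩ := h
  refine ⟨hQ, hP, ?_⟩
  rcases hor with h | h
  · left; intro M hM; rw [h M hM]
  · right; intro M hM; rw [h M hM]; ring

/-- build a multi-index from index sequences and block-bit sequences -/
def mk (a b : Fin m → Fin n) (d1 d2 : Fin m → Bool) :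
    Fin 2 → Fin m → ((Fin n ⊕ Fin n) × (Fin n ⊕ Fin n)) :=
  fun i l => if i = 0 then (cb (d1 l) (a l), cb (d1 (l + 1)) (a (l + 1)))
    else (cb (d2 l) (b l), cb (d2 (l + 1)) (b (l + 1)))

@[simp] lemma mk_zero (a b : Fin m → Fin n) (d1 d2 : Fin m → Bool) (l : Fin m) :
    mk a b d1 d2 0 l = (cb (d1 l) (a l), cb (d1 (l + 1)) (a (l + 1))) := rfl

@[simp] lemma mk_one (a b : Fin m → Fin n) (d1 d2 : Fin m → Bool) (l : Fin m) :
    mk a b d1 d2 1 l = (cb (d2 l) (b l), cb (d2 (l + 1)) (b (l + 1))) := rfl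

/-- extraction -/
def exA (P : Fin 2 → Fin m → ((Fin n ⊕ Fin n) × (Fin n ⊕ Fin n))) : Fin m → Fin n :=
  fun l => idx (P 0 l).1
def exB (P : Fin 2 → Fin m → ((Fin n ⊕ Fin n) × (Fin n ⊕ Fin n))) : Fin m → Fin n :=
  fun l => idx (P 1 l).1
def exD1 (P : Fin 2 → Fin m → ((Fin n ⊕ Fin n) × (Fin n ⊕ Fin n))) : Fin m → Bool :=
  fun l => blkb (P 0 l).1
def exD2 (P : Fin 2 → Fin m → ((Fin n ⊕ Fin n) × (Fin n ⊕ Fin n))) : Fin m → Bool :=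
  fun l => blkb (P 1 l).1

lemma reconstruct {P : Fin 2 → Fin m → ((Fin n ⊕ Fin n) × (Fin n ⊕ Fin n))}
    (hP : IsConsistent P) : P = mk (exA P) (exB P) (exD1 P) (exD2 P) := by
  funext i l
  have h2 : ∀ i l, (P i l).2 = (P i (l + 1)).1 := hP
  rcases fin2 i with rfl | rfl
  · have h : P 0 l = ((P 0 l).1, (P 0 (l + 1)).1) := by
      rw [← h2 0 l]
    rw [h, mk_zero]
    unfold exA exD1
    rw [cb_blkb_idx, cb_blkb_idx]
  · have h : P 1 l = ((P 1 l).1, (P 1 (l + 1)).1) := by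
      rw [← h2 1 l]
    rw [h, mk_one]
    unfold exB exD2
    rw [cb_blkb_idx, cb_blkb_idx]

lemma mk_consistent (a b : Fin m → Fin n) (d1 d2 : Fin m → Bool) :
    IsConsistent (mk a b d1 d2) := by
  intro i l
  rcases fin2 i with rfl | rfl <;> rfl

lemma pair_rigid {a : Fin m → Fin n} (ha : Function.Injective a) (hm : 3 ≤ m)
    {l j : Fin m}
    (h : (a j = a l ∧ a (j + 1) = a (l + 1)) ∨ (a j = a (l + 1) ∧ a (j + 1) = a l)) :
    j = l := by
  rcases h with ⟨h1, _⟩ | ⟨h1, h2⟩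
  · exact ha h1
  · exfalso
    have e1 : j = l + 1 := ha h1
    have e2 : j + 1 = l := ha h2
    exact two_step_ne hm l (by linear_combination e1 - e2)

lemma xb_congr {u v u' v' : Bool} (h : (u = v) ↔ (u' = v')) : xb u' v' = xb u v := by
  unfold xb
  by_cases h1 : u = v
  · rw [if_pos h1, if_pos (h.mp h1)]
  · rw [if_neg h1, if_neg (fun hc => h1 (h.mpr hc))]

lemma xb_inj {u v u' v' : Bool} (h : xb u v = xb u' v') : (u = v) ↔ (u' = v') := by
  unfold xb at h
  by_cases h1 : u = v <;> by_cases h2 : u' = v'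
  · simp [h1, h2]
  · rw [if_pos h1, if_neg h2] at h; exact absurd h (by decide)
  · rw [if_neg h1, if_pos h2] at h; exact absurd h (by decide)
  · simp [h1, h2]

/-- The backward direction: parametrized multi-indices are good. -/
lemma good_mk (hm : 3 ≤ m) (ν : Fin m) {a : Fin m → Fin n}
    (ha : Function.Injective a) {d1 d2 : Fin m → Bool} (hc : Compat ν d1 d2) :
    SGoodDIII n m (gg ν) (mk a (fun k => a (rr ν k)) d1 d2) := by
  set c : Fin m → Fin n := fun k => a (rr ν k) with hcc
  have hcinj : Function.Injective c := fun x y h =>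
    (rr_bijective ν).1 (ha h)
  have hane : ∀ l : Fin m, a l ≠ a (l + 1) := fun l h => succ_ne hm l (ha h)
  have hcne : ∀ l : Fin m, c l ≠ c (l + 1) := fun l h => succ_ne hm l (hcinj h)
  have key01 : ∀ l l' : Fin m,
      simDIII n (mk a c d1 d2 0 l) (mk a c d1 d2 1 l') ↔ l' = gg ν l := by
    intro l l'
    rw [mk_zero, mk_one, sim_iff]
    simp only [xi, idx_cb, blkb_cb]
    constructor
    · rintro ⟨h1, h2, ⟨h4, h5⟩ | ⟨h4, h5⟩⟩
      · exfalso
        have e1 : rr ν l' = l := ha h4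
        have e2 : rr ν (l' + 1) = l + 1 := ha h5
        rw [rr_succ] at e2
        exact fin_two_ne_zero' hm (by linear_combination e1 - e2)
      · have e1 : rr ν l' = l + 1 := ha h4
        have : l' = rr ν (l + 1) := by rw [← e1, rr_invol]
        rw [this, rr_succ, ← gg_eq_rr_sub_one]
    · rintro rfl
      refine ⟨hane l, xb_congr (hc l), Or.inr ⟨?_, ?_⟩⟩
      · exact congrArg a (rr_gg ν l)
      · exact congrArg a (rr_gg_succ ν l)
  refine ⟨mk_consistent _ _ _ _, ?_, ?_⟩
  · intro i l
    rcases fin2 i with rfl | rfl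
    · rw [mk_zero, nonzero_iff]; simpa using hane l
    · rw [mk_one, nonzero_iff]; simpa using hcne l
  · intro i l i' l'
    rcases fin2 i with rfl | rfl <;> rcases fin2 i' with rfl | rfl
    · -- (0,0)
      rw [mk_zero, mk_zero, sim_iff]
      simp only [xi, idx_cb, blkb_cb]
      constructor
      · rintro ⟨h1, h2, h3⟩
        left
        exact ⟨by trivial, (pair_rigid ha hm h3).symm⟩
      · intro h
        have hll : l = l' := by
          rcases h with ⟨_, h⟩ | ⟨_, h, _⟩ | ⟨h, _⟩
          · exact h
          · exact absurd h (by decide)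
          · exact absurd h (by decide)
        subst hll
        exact ⟨hane l, rfl, Or.inl ⟨rfl, rfl⟩⟩
    · -- (0,1)
      rw [key01 l l']
      constructor
      · intro h
        right; left
        exact ⟨rfl, rfl, h⟩
      · rintro (⟨h, _⟩ | ⟨_, _, h⟩ | ⟨h, _⟩)
        · exact absurd h (by decide)
        · exact h
        · exact absurd h (by decide)
    · -- (1,0)
      constructor
      · intro h
        right; right
        exact ⟨rfl, rfl, (key01 l' l).mp (sim_symm h)⟩
      · rintro (⟨h, _⟩ | ⟨h, _⟩ | ⟨_, _, h⟩)
        · exact absurd h (by decide)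
        · exact absurd h (by decide)
        · exact sim_symm ((key01 l' l).mpr h)
    · -- (1,1)
      rw [mk_one, mk_one, sim_iff]
      simp only [xi, idx_cb, blkb_cb]
      constructor
      · rintro ⟨h1, h2, h3⟩
        left
        exact ⟨by trivial, (pair_rigid hcinj hm h3).symm⟩
      · intro h
        have hll : l = l' := by
          rcases h with ⟨_, h⟩ | ⟨h, _⟩ | ⟨_, h, _⟩
          · exact h
          · exact absurd h (by decide)
          · exact absurd h (by decide)
        subst hll
        exact ⟨hcne l, rfl, Or.inl ⟨rfl, rfl⟩⟩

end Stmt16Aux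
namespace Stmt16Aux

open scoped Fin.CommRing Fin.NatCast

variable {n m : ℕ} [NeZero m]

lemma gg_succ (ν : Fin m) (l : Fin m) : gg ν (l + 1) = gg ν l - 1 := by
  unfold gg; ring

lemma rr_succ_eq_gg (ν : Fin m) (l : Fin m) : rr ν (l + 1) = gg ν l := by
  unfold rr gg; ring

lemma rr_eq_gg_add_one (ν : Fin m) (l : Fin m) : rr ν l = gg ν l + 1 := by
  unfold rr gg; ring

lemma good_elim (ν : Fin m) {P : Fin 2 → Fin m → ((Fin n ⊕ Fin n) × (Fin n ⊕ Fin n))}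
    (hP : SGoodDIII n m (gg ν) P) :
    (∀ l, exA P l ≠ exA P (l + 1)) ∧ Compat ν (exD1 P) (exD2 P) ∧
      (∀ l, (exB P (gg ν l) = exA P l ∧ exB P (gg ν l + 1) = exA P (l + 1)) ∨
        (exB P (gg ν l) = exA P (l + 1) ∧ exB P (gg ν l + 1) = exA P l)) := by
  obtain ⟨hcons, hnz, hsim⟩ := hP
  have e0 : ∀ l, idx (P 0 l).2 = exA P (l + 1) := fun l => by
    rw [hcons 0 l]; rfl
  have e1 : ∀ l, idx (P 1 l).2 = exB P (l + 1) := fun l => by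
    rw [hcons 1 l]; rfl
  have f0 : ∀ l, blkb (P 0 l).2 = exD1 P (l + 1) := fun l => by
    rw [hcons 0 l]; rfl
  have f1 : ∀ l, blkb (P 1 l).2 = exD2 P (l + 1) := fun l => by
    rw [hcons 1 l]; rfl
  have hs : ∀ l, simDIII n (P 0 l) (P 1 (gg ν l)) := fun l =>
    (hsim 0 l 1 (gg ν l)).mpr (Or.inr (Or.inl ⟨rfl, rfl, rfl⟩))
  refine ⟨?_, ?_, ?_⟩
  · intro l
    have h := ((sim_iff _ _).mp (hs l)).1
    rw [e0 l] at h
    exact h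
  · intro l
    have h := ((sim_iff _ _).mp (hs l)).2.1
    unfold xi at h
    rw [f0 l, f1 (gg ν l)] at h
    exact (xb_inj h.symm)
  · intro l
    have h := ((sim_iff _ _).mp (hs l)).2.2
    rw [e0 l, e1 (gg ν l)] at h
    exact h

lemma hOr_shift {a b : Fin m → Fin n} (ν : Fin m)
    (hOr : ∀ l, (b (gg ν l) = a l ∧ b (gg ν l + 1) = a (l + 1)) ∨
      (b (gg ν l) = a (l + 1) ∧ b (gg ν l + 1) = a l)) :
    ∀ k, (b k = a (gg ν k) ∧ b (k + 1) = a (gg ν k + 1)) ∨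
      (b k = a (gg ν k + 1) ∧ b (k + 1) = a (gg ν k)) := by
  intro k
  have h := hOr (gg ν k)
  rw [gg_invol] at h
  exact h

lemma b_eq_of_inj (hm : 3 ≤ m) (ν : Fin m) {a b : Fin m → Fin n}
    (ha : Function.Injective a)
    (hOr : ∀ l, (b (gg ν l) = a l ∧ b (gg ν l + 1) = a (l + 1)) ∨
      (b (gg ν l) = a (l + 1) ∧ b (gg ν l + 1) = a l)) :
    b = fun k => a (rr ν k) := by
  have hOr' := hOr_shift ν hOr
  have hg1 : gg ν 1 = gg ν 0 - 1 := by unfold gg; ring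
  have base : b 0 = a (rr ν 0) := by
    rw [rr_eq_gg_add_one]
    rcases hOr' 0 with ⟨h1, h2⟩ | ⟨h1, h2⟩
    · exfalso
      rw [show (0 : Fin m) + 1 = 1 from zero_add 1] at h2
      rcases hOr' 1 with ⟨h3, h4⟩ | ⟨h3, h4⟩
      · have e := ha (h2.symm.trans h3)
        exact fin_two_ne_zero' hm (by linear_combination e + hg1)
      · have e := ha (h2.symm.trans h3)
        exact fin_one_ne_zero' hm (by linear_combination e + hg1)
    · exact h1
  funext k
  refine fin_cycle_induction (fun k => b k = a (rr ν k)) base ?_ k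
  intro l hl
  rcases hOr' l with ⟨h1, h2⟩ | ⟨h1, h2⟩
  · exfalso
    rw [hl, rr_eq_gg_add_one] at h1
    have := ha h1
    exact fin_one_ne_zero' hm (by linear_combination this)
  · rw [h2, rr_succ_eq_gg]

lemma b_determined (hm : 3 ≤ m) (ν : Fin m) {a b b' : Fin m → Fin n}
    (hadj : ∀ l, a l ≠ a (l + 1))
    (hOr : ∀ l, (b (gg ν l) = a l ∧ b (gg ν l + 1) = a (l + 1)) ∨
      (b (gg ν l) = a (l + 1) ∧ b (gg ν l + 1) = a l))
    (hOr2 : ∀ l, (b' (gg ν l) = a l ∧ b' (gg ν l + 1) = a (l + 1)) ∨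
      (b' (gg ν l) = a (l + 1) ∧ b' (gg ν l + 1) = a l))
    (h0 : b 0 = b' 0) : b = b' := by
  have hOr' := hOr_shift ν hOr
  have hOr2' := hOr_shift ν hOr2
  funext k
  refine fin_cycle_induction (fun k => b k = b' k) h0 ?_ k
  intro l hl
  have hadjg := hadj (gg ν l)
  rcases hOr' l with ⟨h1, h2⟩ | ⟨h1, h2⟩ <;> rcases hOr2' l with ⟨h3, h4⟩ | ⟨h3, h4⟩
  · rw [h2, h4]
  · exfalso; apply hadjg; rw [← h1, hl, h3]
  · exfalso; apply hadjg; rw [← h3, ← hl, h1]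
  · rw [h2, h4]

lemma b_zero_mem {a b : Fin m → Fin n} (ν : Fin m)
    (hOr : ∀ l, (b (gg ν l) = a l ∧ b (gg ν l + 1) = a (l + 1)) ∨
      (b (gg ν l) = a (l + 1) ∧ b (gg ν l + 1) = a l)) :
    b 0 = a (gg ν 0) ∨ b 0 = a (gg ν 0 + 1) := by
  rcases hOr_shift ν hOr 0 with ⟨h1, _⟩ | ⟨h1, _⟩
  · left; exact h1
  · right; exact h1

end Stmt16Aux
namespace Stmt16Aux

lemma imaginary_sq {z : ℂ} (hz : z.re = 0) :
    z ^ 2 = ((-(‖z‖) ^ 2 : ℝ) : ℂ) := by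
  have habs : ‖z‖ ^ 2 = z.re * z.re + z.im * z.im := by
    rw [Complex.sq_norm, Complex.normSq_apply]
  apply Complex.ext <;>
    simp [pow_two, Complex.mul_re, Complex.mul_im, hz, habs] <;> ring

variable {n m : ℕ} [NeZero m] {Ω : Type*} [MeasurableSpace Ω] (μ : Measure Ω)
  (σ : ℝ) (Y : Fin 2 → Ω → Matrix (Fin n) (Fin n) ℂ)

lemma sq_int (hvar : ∀ i (a b : Fin n), a ≠ b →
      ∫ ω, ‖Y i ω a b‖ ^ 2 ∂μ = σ ^ 2)
    (him : ∀ i ω (a b : Fin n), (Y i ω a b).re = 0)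
    (i : Fin 2) {a b : Fin n} (hab : a ≠ b) :
    ∫ ω, (Y i ω a b) ^ 2 ∂μ = -((σ : ℂ) ^ 2) := by
  have h : (fun ω => (Y i ω a b) ^ 2)
      = fun ω => ((-‖Y i ω a b‖ ^ 2 : ℝ) : ℂ) :=
    funext fun ω => imaginary_sq (him i ω a b)
  have hofr : ∫ ω, ((-‖Y i ω a b‖ ^ 2 : ℝ) : ℂ) ∂μ
      = ((∫ ω, (-‖Y i ω a b‖ ^ 2 : ℝ) ∂μ : ℝ) : ℂ) := integral_ofReal
  rw [h, hofr]
  have h2 : (fun ω => (-‖Y i ω a b‖ ^ 2 : ℝ))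
      = fun ω => -(‖Y i ω a b‖ ^ 2 : ℝ) := by
    funext ω; ring
  rw [h2, MeasureTheory.integral_neg, hvar i a b hab]
  push_cast
  ring

lemma factor_int (hvar : ∀ i (a b : Fin n), a ≠ b →
      ∫ ω, ‖Y i ω a b‖ ^ 2 ∂μ = σ ^ 2)
    (him : ∀ i ω (a b : Fin n), (Y i ω a b).re = 0)
    (hskew : ∀ i ω (a b : Fin n), Y i ω b a = - Y i ω a b)
    (i : Fin 2) {a b : Fin n} (hab : a ≠ b) (s1 s2 : ℂ) :
    ∫ ω, (s1 * Y i ω a b) * (s2 * Y i ω b a) ∂μ = s1 * s2 * (σ : ℂ) ^ 2 := by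
  have h : (fun ω => (s1 * Y i ω a b) * (s2 * Y i ω b a))
      = fun ω => (-(s1 * s2)) • ((Y i ω a b) ^ 2) := by
    funext ω
    rw [hskew i ω a b, smul_eq_mul]
    ring
  rw [h, integral_smul, sq_int μ σ Y hvar him i hab, smul_eq_mul]
  ring

lemma factor_int2 (hvar : ∀ i (a b : Fin n), a ≠ b →
      ∫ ω, ‖Y i ω a b‖ ^ 2 ∂μ = σ ^ 2)
    (him : ∀ i ω (a b : Fin n), (Y i ω a b).re = 0)
    (i : Fin 2) {a b : Fin n} (hab : a ≠ b) (s1 s2 : ℂ) :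
    ∫ ω, (s1 * Y i ω a b) * (s2 * Y i ω a b) ∂μ = -(s1 * s2) * (σ : ℂ) ^ 2 := by
  have h : (fun ω => (s1 * Y i ω a b) * (s2 * Y i ω a b))
      = fun ω => (s1 * s2) • ((Y i ω a b) ^ 2) := by
    funext ω
    rw [smul_eq_mul]
    ring
  rw [h, integral_smul, sq_int μ σ Y hvar him i hab, smul_eq_mul]
  ring

lemma dIII_entry (ω : Ω) (p q : Fin n ⊕ Fin n) :
    dIIIBlock (Y 0 ω) (Y 1 ω) p q = sgn p q * Y (xi p q) ω (idx p) (idx q) := by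
  have := entry_eq (n := n) (fun j => Y j ω) p q
  exact this

/-- the value of a single factor for a parametrized good multi-index -/
lemma value_mk (hm : 3 ≤ m)
    (hvar : ∀ i (a b : Fin n), a ≠ b →
      ∫ ω, ‖Y i ω a b‖ ^ 2 ∂μ = σ ^ 2)
    (him : ∀ i ω (a b : Fin n), (Y i ω a b).re = 0)
    (hskew : ∀ i ω (a b : Fin n), Y i ω b a = - Y i ω a b)
    (ν : Fin m) {a : Fin m → Fin n}
    (ha : Function.Injective a) {d1 d2 : Fin m → Bool} (hc : Compat ν d1 d2) :
    (∏ l : Fin m, ∫ ω,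
        dIIIBlock (Y 0 ω) (Y 1 ω) (mk a (fun k => a (rr ν k)) d1 d2 0 l).1
          (mk a (fun k => a (rr ν k)) d1 d2 0 l).2 *
        dIIIBlock (Y 0 ω) (Y 1 ω) (mk a (fun k => a (rr ν k)) d1 d2 1 (gg ν l)).1
          (mk a (fun k => a (rr ν k)) d1 d2 1 (gg ν l)).2 ∂μ)
      = SS d1 * SS d2 * (σ : ℂ) ^ (2 * m) := by
  have hane : ∀ l : Fin m, a l ≠ a (l + 1) := fun l h => succ_ne hm l (ha h)
  have hfac : ∀ l : Fin m, (∫ ω,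
      dIIIBlock (Y 0 ω) (Y 1 ω) (mk a (fun k => a (rr ν k)) d1 d2 0 l).1
        (mk a (fun k => a (rr ν k)) d1 d2 0 l).2 *
      dIIIBlock (Y 0 ω) (Y 1 ω) (mk a (fun k => a (rr ν k)) d1 d2 1 (gg ν l)).1
        (mk a (fun k => a (rr ν k)) d1 d2 1 (gg ν l)).2 ∂μ)
      = sg (d1 l) (d1 (l + 1)) * sg (d2 (gg ν l)) (d2 (gg ν l + 1)) * (σ : ℂ) ^ 2 := by
    intro l
    have e1 : ∀ ω, dIIIBlock (Y 0 ω) (Y 1 ω) (mk a (fun k => a (rr ν k)) d1 d2 0 l).1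
        (mk a (fun k => a (rr ν k)) d1 d2 0 l).2
        = sg (d1 l) (d1 (l + 1)) * Y (xb (d1 l) (d1 (l + 1))) ω (a l) (a (l + 1)) := by
      intro ω
      rw [mk_zero, dIII_entry]
      simp only [sgn, xi, idx_cb, blkb_cb]
    have e2 : ∀ ω, dIIIBlock (Y 0 ω) (Y 1 ω) (mk a (fun k => a (rr ν k)) d1 d2 1 (gg ν l)).1
        (mk a (fun k => a (rr ν k)) d1 d2 1 (gg ν l)).2
        = sg (d2 (gg ν l)) (d2 (gg ν l + 1)) * Y (xb (d1 l) (d1 (l + 1))) ω (a (l + 1)) (a l) := by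
      intro ω
      rw [mk_one, dIII_entry]
      simp only [sgn, xi, idx_cb, blkb_cb]
      rw [rr_gg, rr_gg_succ, xb_congr (hc l)]
    simp only [e1, e2]
    rw [factor_int μ σ Y hvar him hskew _ (hane l)]
  rw [Finset.prod_congr rfl (fun l _ => hfac l)]
  rw [Finset.prod_mul_distrib, Finset.prod_mul_distrib]
  have hr : (∏ l : Fin m, sg (d2 (gg ν l)) (d2 (gg ν l + 1))) = SS d2 := by
    unfold SS
    exact Fintype.prod_bijective (gg ν) (gg_bijective ν) _ _ (fun l => rfl)
  rw [hr]
  rw [Finset.prod_const, Finset.card_univ, Fintype.card_fin, pow_mul]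
  rfl

/-- uniform bound for factors of an arbitrary good multi-index -/
lemma factor_norm_good (hσ : 0 ≤ σ)
    (hvar : ∀ i (a b : Fin n), a ≠ b →
      ∫ ω, ‖Y i ω a b‖ ^ 2 ∂μ = σ ^ 2)
    (him : ∀ i ω (a b : Fin n), (Y i ω a b).re = 0)
    (hskew : ∀ i ω (a b : Fin n), Y i ω b a = - Y i ω a b)
    (ν : Fin m) {P : Fin 2 → Fin m → ((Fin n ⊕ Fin n) × (Fin n ⊕ Fin n))}
    (hP : SGoodDIII n m (gg ν) P) (l : Fin m) :
    ‖∫ ω, dIIIBlock (Y 0 ω) (Y 1 ω) (P 0 l).1 (P 0 l).2 *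
        dIIIBlock (Y 0 ω) (Y 1 ω) (P 1 (gg ν l)).1 (P 1 (gg ν l)).2 ∂μ‖ ≤ σ ^ 2 := by
  obtain ⟨hcons, hnz, hsim⟩ := hP
  have hs : simDIII n (P 0 l) (P 1 (gg ν l)) :=
    (hsim 0 l 1 (gg ν l)).mpr (Or.inr (Or.inl ⟨rfl, rfl, rfl⟩))
  obtain ⟨h1, h2, h3⟩ := (sim_iff _ _).mp hs
  have e1 : ∀ ω, dIIIBlock (Y 0 ω) (Y 1 ω) (P 0 l).1 (P 0 l).2
      = sgn (P 0 l).1 (P 0 l).2 * Y (xi (P 0 l).1 (P 0 l).2) ω (idx (P 0 l).1) (idx (P 0 l).2) :=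
    fun ω => dIII_entry Y ω _ _
  have e2 : ∀ ω, dIIIBlock (Y 0 ω) (Y 1 ω) (P 1 (gg ν l)).1 (P 1 (gg ν l)).2
      = sgn (P 1 (gg ν l)).1 (P 1 (gg ν l)).2 *
        Y (xi (P 0 l).1 (P 0 l).2) ω (idx (P 1 (gg ν l)).1) (idx (P 1 (gg ν l)).2) := by
    intro ω
    rw [dIII_entry, h2]
  have hnorm : ‖(σ : ℂ) ^ 2‖ = σ ^ 2 := by
    rw [norm_pow, Complex.norm_real, Real.norm_eq_abs, abs_of_nonneg hσ]
  have hsg1 : ‖sgn (P 0 l).1 (P 0 l).2‖ = 1 := norm_sg _ _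
  have hsg2 : ‖sgn (P 1 (gg ν l)).1 (P 1 (gg ν l)).2‖ = 1 := norm_sg _ _
  rcases h3 with ⟨ha, hb⟩ | ⟨ha, hb⟩
  · have : (∫ ω, dIIIBlock (Y 0 ω) (Y 1 ω) (P 0 l).1 (P 0 l).2 *
        dIIIBlock (Y 0 ω) (Y 1 ω) (P 1 (gg ν l)).1 (P 1 (gg ν l)).2 ∂μ)
        = -(sgn (P 0 l).1 (P 0 l).2 * sgn (P 1 (gg ν l)).1 (P 1 (gg ν l)).2) * (σ : ℂ) ^ 2 := by
      simp only [e1, e2, ha, hb]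
      rw [factor_int2 μ σ Y hvar him _ h1]
    rw [this, norm_mul, norm_neg, norm_mul, hsg1, hsg2, hnorm]
    simp
  · have : (∫ ω, dIIIBlock (Y 0 ω) (Y 1 ω) (P 0 l).1 (P 0 l).2 *
        dIIIBlock (Y 0 ω) (Y 1 ω) (P 1 (gg ν l)).1 (P 1 (gg ν l)).2 ∂μ)
        = sgn (P 0 l).1 (P 0 l).2 * sgn (P 1 (gg ν l)).1 (P 1 (gg ν l)).2 * (σ : ℂ) ^ 2 := by
      simp only [e1, e2, ha, hb]
      rw [factor_int μ σ Y hvar him hskew _ h1]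
    rw [this, norm_mul, norm_mul, hsg1, hsg2, hnorm]
    simp

end Stmt16Aux
namespace Stmt16Aux

open Finset Filter

lemma injCard_eq (n m : ℕ) :
    (Finset.univ.filter fun f : Fin m → Fin n => Function.Injective f).card
      = n.descFactorial m := by
  rw [← Fintype.card_subtype]
  rw [Fintype.card_congr (Equiv.subtypeInjectiveEquivEmbedding (Fin m) (Fin n))]
  rw [Fintype.card_embedding_eq]
  rw [Fintype.card_fin, Fintype.card_fin]

lemma noninjCard_eq (n m : ℕ) :
    (Finset.univ.filter fun f : Fin m → Fin n => ¬ Function.Injective f).card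
      = n ^ m - n.descFactorial m := by
  have h := Finset.card_filter_add_card_filter_not
    (s := (Finset.univ : Finset (Fin m → Fin n)))
    (p := fun f => Function.Injective f)
  rw [injCard_eq] at h
  have hcard : (Finset.univ : Finset (Fin m → Fin n)).card = n ^ m := by
    simp [Finset.card_univ]
  omega

lemma descFactorial_div_tendsto (m : ℕ) :
    Tendsto (fun n : ℕ => ((n.descFactorial m : ℝ)) / (n : ℝ) ^ m) atTop (nhds 1) := by
  have h1 : ∀ i : ℕ, Tendsto (fun n : ℕ => ((n : ℝ) - i) / n) atTop (nhds 1) := by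
    intro i
    have h2 : Tendsto (fun n : ℕ => 1 - (i : ℝ) * (1 / (n : ℝ))) atTop
        (nhds (1 - (i : ℝ) * 0)) :=
      tendsto_const_nhds.sub (tendsto_one_div_atTop_nhds_zero_nat.const_mul (i : ℝ))
    rw [mul_zero, sub_zero] at h2
    apply h2.congr'
    filter_upwards [eventually_ge_atTop 1] with n hn
    have hn' : (n : ℝ) ≠ 0 := by positivity
    field_simp
  have hprod : Tendsto (fun n : ℕ => ∏ i ∈ Finset.range m, ((n : ℝ) - i) / n) atTop
      (nhds 1) := by
    have := tendsto_finset_prod (Finset.range m) (fun i _ => h1 i)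
    simpa using this
  apply hprod.congr'
  filter_upwards [eventually_ge_atTop (max m 1)] with n hn
  have hm : m ≤ n := le_trans (le_max_left _ _) hn
  have hn1 : 1 ≤ n := le_trans (le_max_right _ _) hn
  rw [Nat.descFactorial_eq_prod_range]
  rw [Nat.cast_prod]
  have hpow : (n : ℝ) ^ m = ∏ _i ∈ Finset.range m, (n : ℝ) := by
    rw [Finset.prod_const, Finset.card_range]
  rw [hpow, ← Finset.prod_div_distrib]
  apply Finset.prod_congr rfl
  intro i hi
  rw [Finset.mem_range] at hi
  rw [Nat.cast_sub (le_of_lt (lt_of_lt_of_le hi hm))]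

end Stmt16Aux
namespace Stmt16Aux

open Finset

variable {n m : ℕ} [NeZero m] {Ω : Type*} [MeasurableSpace Ω]

lemma main_decomp (μ : Measure Ω) (σ : ℝ) (hm : 3 ≤ m) (ν : Fin m) (hσ : 0 ≤ σ)
    (Y : Fin 2 → Ω → Matrix (Fin n) (Fin n) ℂ)
    (hvar : ∀ i (a b : Fin n), a ≠ b → ∫ ω, ‖Y i ω a b‖ ^ 2 ∂μ = σ ^ 2)
    (him : ∀ i ω (a b : Fin n), (Y i ω a b).re = 0)
    (hskew : ∀ i ω (a b : Fin n), Y i ω b a = - Y i ω a b) :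
    ∃ R : ℂ,
      (∑ᶠ P ∈ {P : Fin 2 → Fin m → ((Fin n ⊕ Fin n) × (Fin n ⊕ Fin n)) |
          SGoodDIII n m (gg ν) P},
        ∏ l : Fin m, ∫ ω, dIIIBlock (Y 0 ω) (Y 1 ω) (P 0 l).1 (P 0 l).2 *
          dIIIBlock (Y 0 ω) (Y 1 ω) (P 1 (gg ν l)).1 (P 1 (gg ν l)).2 ∂μ)
        = (n.descFactorial m : ℂ) * ((1 + (-1 : ℂ) ^ m) * 2 ^ m * (σ : ℂ) ^ (2 * m)) + R
      ∧ ‖R‖ ≤ ((n ^ m - n.descFactorial m : ℕ) : ℝ) * 2 ^ (2 * m + 1) * σ ^ (2 * m) := by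
  classical
  set F : (Fin 2 → Fin m → ((Fin n ⊕ Fin n) × (Fin n ⊕ Fin n))) → ℂ := fun P =>
    ∏ l : Fin m, ∫ ω, dIIIBlock (Y 0 ω) (Y 1 ω) (P 0 l).1 (P 0 l).2 *
      dIIIBlock (Y 0 ω) (Y 1 ω) (P 1 (gg ν l)).1 (P 1 (gg ν l)).2 ∂μ with hF
  set T : Finset (Fin 2 → Fin m → ((Fin n ⊕ Fin n) × (Fin n ⊕ Fin n))) :=
    univ.filter (fun P => SGoodDIII n m (gg ν) P) with hT
  have hset : {P : Fin 2 → Fin m → ((Fin n ⊕ Fin n) × (Fin n ⊕ Fin n)) |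
      SGoodDIII n m (gg ν) P} = ↑T := by
    ext P; simp [hT]
  rw [hset, finsum_mem_coe_finset]
  rw [← Finset.sum_filter_add_sum_filter_not T (fun P => Function.Injective (exA P)) F]
  refine ⟨∑ P ∈ T.filter (fun P => ¬ Function.Injective (exA P)), F P, ?_, ?_⟩
  · -- A-part
    congr 1
    set D : Finset ((Fin m → Fin n) × (Fin m → Bool) × (Fin m → Bool)) :=
      univ.filter (fun t => Function.Injective t.1 ∧ Compat ν t.2.1 t.2.2) with hD
    have hA : T.filter (fun P => Function.Injective (exA P))
        = D.image (fun t => mk t.1 (fun k => t.1 (rr ν k)) t.2.1 t.2.2) := by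
      ext P
      simp only [hD, hT, mem_filter, mem_image, mem_univ, true_and]
      constructor
      · rintro ⟨hgood, hinj⟩
        obtain ⟨hadj, hcompat, hOr⟩ := good_elim ν hgood
        have hb := b_eq_of_inj hm ν hinj hOr
        refine ⟨(exA P, exD1 P, exD2 P), ⟨hinj, hcompat⟩, ?_⟩
        rw [← hb]
        exact (reconstruct hgood.1).symm
      · rintro ⟨t, ⟨hinj, hcompat⟩, rfl⟩
        refine ⟨good_mk hm ν hinj hcompat, ?_⟩
        have he : exA (mk t.1 (fun k => t.1 (rr ν k)) t.2.1 t.2.2) = t.1 := by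
          funext l
          show idx (cb (t.2.1 l) (t.1 l)) = t.1 l
          rw [idx_cb]
        rw [he]
        exact hinj
    have hmkinj : ∀ t ∈ D, ∀ t' ∈ D,
        mk t.1 (fun k => t.1 (rr ν k)) t.2.1 t.2.2
          = mk t'.1 (fun k => t'.1 (rr ν k)) t'.2.1 t'.2.2 → t = t' := by
      rintro ⟨a, d1, d2⟩ - ⟨a', d1', d2'⟩ - h
      have h0 : ∀ l, cb (d1 l) (a l) = cb (d1' l) (a' l) := fun l =>
        congrArg (fun P => (P 0 l).1) h
      have h1 : ∀ l, cb (d2 l) (a (rr ν l)) = cb (d2' l) (a' (rr ν l))  := fun l =>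
        congrArg (fun P => (P 1 l).1) h
      have ha : a = a' := funext fun l => (cb_injective2 (h0 l)).2
      have hd1 : d1 = d1' := funext fun l => (cb_injective2 (h0 l)).1
      have hd2 : d2 = d2' := funext fun l => (cb_injective2 (h1 l)).1
      simp only [Prod.mk.injEq]
      exact ⟨ha, hd1, hd2⟩
    rw [hA, Finset.sum_image hmkinj]
    have hval : ∀ t ∈ D, F (mk t.1 (fun k => t.1 (rr ν k)) t.2.1 t.2.2)
        = SS t.2.1 * SS t.2.2 * (σ : ℂ) ^ (2 * m) := by
      rintro ⟨a, d1, d2⟩ ht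
      rw [hD, mem_filter] at ht
      exact value_mk μ σ Y hm hvar him hskew ν ht.2.1 ht.2.2
    rw [Finset.sum_congr rfl hval]
    have hprod : D = (univ.filter fun a : Fin m → Fin n => Function.Injective a) ×ˢ
        (univ.filter fun d : (Fin m → Bool) × (Fin m → Bool) => Compat ν d.1 d.2) := by
      ext t
      simp [hD, Finset.mem_product]
    rw [hprod, Finset.sum_product]
    have hinner : ∀ a : Fin m → Fin n,
        (∑ d ∈ univ.filter fun d : (Fin m → Bool) × (Fin m → Bool) => Compat ν d.1 d.2,
          SS d.1 * SS d.2 * (σ : ℂ) ^ (2 * m))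
          = ((1 + (-1 : ℂ) ^ m) * 2 ^ m) * (σ : ℂ) ^ (2 * m) := by
      intro a
      rw [← Finset.sum_mul, Tsum]
    rw [Finset.sum_congr rfl (fun a _ => hinner a), Finset.sum_const, injCard_eq,
      nsmul_eq_mul]
  · -- B-part bound
    set B := T.filter (fun P => ¬ Function.Injective (exA P)) with hB
    have hgoodB : ∀ P ∈ B, SGoodDIII n m (gg ν) P := by
      intro P hP
      rw [hB, mem_filter, hT, mem_filter] at hP
      exact hP.1.2
    have hFnorm : ∀ P ∈ B, ‖F P‖ ≤ σ ^ (2 * m) := by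
      intro P hP
      rw [hF]
      rw [norm_prod]
      calc (∏ l : Fin m, ‖∫ ω, dIIIBlock (Y 0 ω) (Y 1 ω) (P 0 l).1 (P 0 l).2 *
            dIIIBlock (Y 0 ω) (Y 1 ω) (P 1 (gg ν l)).1 (P 1 (gg ν l)).2 ∂μ‖)
          ≤ ∏ _l : Fin m, σ ^ 2 := by
            apply Finset.prod_le_prod
            · intro l _; exact norm_nonneg _
            · intro l _
              exact factor_norm_good μ σ Y hσ hvar him hskew ν (hgoodB P hP) l
        _ = σ ^ (2 * m) := by
            rw [Finset.prod_const, Finset.card_univ, Fintype.card_fin, ← pow_mul,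
              mul_comm 2 m]
    have hcard : B.card ≤ (n ^ m - n.descFactorial m) * 2 ^ (2 * m + 1) := by
      have hmaps : ∀ P ∈ B, (exA P, exD1 P, exD2 P,
          decide (exB P 0 = exA P (gg ν 0)))
          ∈ (univ.filter fun a : Fin m → Fin n => ¬ Function.Injective a) ×ˢ
            (univ : Finset ((Fin m → Bool) × (Fin m → Bool) × Bool)) := by
        intro P hP
        rw [hB, mem_filter] at hP
        rw [Finset.mem_product]
        exact ⟨by rw [mem_filter]; exact ⟨mem_univ _, hP.2⟩, mem_univ _⟩
      have hinjOn : ∀ P ∈ B, ∀ Q ∈ B, (exA P, exD1 P, exD2 P,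
          decide (exB P 0 = exA P (gg ν 0))) = (exA Q, exD1 Q, exD2 Q,
          decide (exB Q 0 = exA Q (gg ν 0))) → P = Q := by
        intro P hP Q hQ h
        simp only [Prod.mk.injEq] at h
        obtain ⟨h1, h2, h3, h4⟩ := h
        have hgP := hgoodB P hP
        have hgQ := hgoodB Q hQ
        obtain ⟨hadjP, _, hOrP⟩ := good_elim ν hgP
        obtain ⟨_, _, hOrQ⟩ := good_elim ν hgQ
        rw [← h1] at hOrQ
        rw [← h1] at h4
        have hiff : (exB P 0 = exA P (gg ν 0)) ↔ (exB Q 0 = exA P (gg ν 0)) :=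
          decide_eq_decide.mp h4
        have h0 : exB P 0 = exB Q 0 := by
          rcases b_zero_mem ν hOrP with hbp | hbp
          · rw [hbp, (hiff.mp hbp)]
          · rcases b_zero_mem ν hOrQ with hbq | hbq
            · exfalso
              have h5 := hiff.mpr hbq
              rw [hbp] at h5
              exact hadjP (gg ν 0) h5.symm
            · rw [hbp, hbq]
        have hb : exB P = exB Q := b_determined hm ν hadjP hOrP hOrQ h0
        rw [reconstruct hgP.1, reconstruct hgQ.1, h1, h2, h3, hb]
      have := Finset.card_le_card_of_injOn _ hmaps hinjOn
      calc B.card ≤ ((univ.filter fun a : Fin m → Fin n => ¬ Function.Injective a) ×ˢ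
            (univ : Finset ((Fin m → Bool) × (Fin m → Bool) × Bool))).card := this
        _ = (n ^ m - n.descFactorial m) * 2 ^ (2 * m + 1) := by
            rw [Finset.card_product, noninjCard_eq]
            congr 1
            simp [Finset.card_univ]
            ring
    calc ‖∑ P ∈ B, F P‖ ≤ ∑ P ∈ B, ‖F P‖ := norm_sum_le _ _
      _ ≤ ∑ _P ∈ B, σ ^ (2 * m) := Finset.sum_le_sum hFnorm
      _ = B.card * σ ^ (2 * m) := by rw [Finset.sum_const, nsmul_eq_mul]
      _ ≤ ((n ^ m - n.descFactorial m : ℕ) : ℝ) * 2 ^ (2 * m + 1) * σ ^ (2 * m) := by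
          apply mul_le_mul_of_nonneg_right _ (by positivity)
          rw [show ((n ^ m - n.descFactorial m : ℕ) : ℝ) * 2 ^ (2 * m + 1)
            = (((n ^ m - n.descFactorial m) * 2 ^ (2 * m + 1) : ℕ) : ℝ) by push_cast; ring]
          exact_mod_cast hcard

end Stmt16Aux

open Stmt16Aux

theorem stmt16
    {Ω : Type*} [MeasurableSpace Ω] (μ : Measure Ω) [IsProbabilityMeasure μ]
    (σ : ℝ) (hσ : 0 < σ)
    (X : (n : ℕ) → Fin 2 → Ω → Matrix (Fin n) (Fin n) ℂ)
    (hmeas : ∀ n i a b, Measurable fun ω => X n i ω a b)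
    (him : ∀ n i ω a b, (X n i ω a b).re = 0)
    (hskew : ∀ n i ω a b, X n i ω b a = - X n i ω a b)
    (hindep : ∀ n, iIndepFun
      (fun (v : {v : Fin 2 × Fin n × Fin n // v.2.1 < v.2.2}) ω =>
        X n v.1.1 ω v.1.2.1 v.1.2.2) μ)
    (hcent : ∀ n i a b, ∫ ω, X n i ω a b ∂μ = 0)
    (hvar : ∀ n i (a b : Fin n), a ≠ b → ∫ ω, ‖X n i ω a b‖ ^ 2 ∂μ = σ ^ 2)
    (hmom : ∀ k : ℕ, ∃ C : ℝ, ∀ n i (a b : Fin n),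
      ∫ ω, ‖X n i ω a b‖ ^ k ∂μ ≤ C)
    (m : ℕ) [NeZero m] (hm : 3 ≤ m) (ν : ℕ) (hν : ν < m)
    -- `g = τ γ^ν` is a reflection: in the `0`-based labels `Fin m` of `[m]`,
    -- `γ : l ↦ l + 1`, `τ : l ↦ -l - 1`, so `g : l ↦ -(l + ν) - 1`.
    (g : Fin m → Fin m) (hg : g = fun l => -(l + ⟨ν, hν⟩) - 1) :
    Tendsto (fun n : ℕ =>
      ((n : ℂ) ^ m)⁻¹ *
        ∑ᶠ P ∈ {P : Fin 2 → Fin m → ((Fin n ⊕ Fin n) × (Fin n ⊕ Fin n)) |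
            SGoodDIII n m g P},
          ∏ l : Fin m, ∫ ω, dIIIBlock (X n 0 ω) (X n 1 ω) (P 0 l).1 (P 0 l).2 *
            dIIIBlock (X n 0 ω) (X n 1 ω) (P 1 (g l)).1 (P 1 (g l)).2 ∂μ)
      atTop
      (nhds (if Odd m then 0 else 2 ^ (m + 1) * (σ : ℂ) ^ (2 * m))) := by
  classical
  have hgg : g = gg (⟨ν, hν⟩ : Fin m) := by
    rw [hg]; rfl
  subst hgg
  set ν' : Fin m := ⟨ν, hν⟩
  have hdecomp := fun N : ℕ => main_decomp μ σ hm ν' hσ.le (X N)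
    (fun i a b hab => hvar N i a b hab) (fun i ω a b => him N i ω a b)
    (fun i ω a b => hskew N i ω a b)
  choose R hR1 hR2 using hdecomp
  set C : ℂ := (1 + (-1 : ℂ) ^ m) * 2 ^ m * (σ : ℂ) ^ (2 * m) with hCdef
  have hC : (if Odd m then (0 : ℂ) else 2 ^ (m + 1) * (σ : ℂ) ^ (2 * m)) = C := by
    rw [hCdef]
    by_cases hodd : Odd m
    · rw [if_pos hodd, hodd.neg_one_pow]; ring
    · rw [if_neg hodd, (Nat.not_odd_iff_even.mp hodd).neg_one_pow]; ring
  rw [hC]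
  have hreal : Tendsto (fun N : ℕ => ((N.descFactorial m : ℝ)) / (N : ℝ) ^ m) atTop
      (nhds 1) := descFactorial_div_tendsto m
  have h1 : Tendsto (fun N : ℕ => ((N.descFactorial m : ℂ)) / (N : ℂ) ^ m) atTop
      (nhds 1) := by
    have := (Complex.continuous_ofReal.tendsto (1 : ℝ)).comp hreal
    apply this.congr
    intro N
    simp only [Function.comp_apply]
    push_cast
    rfl
  set K : ℝ := 2 ^ (2 * m + 1) * σ ^ (2 * m) with hK
  have hKnn : 0 ≤ K := by positivity
  have h2 : Tendsto (fun N : ℕ => ((N : ℂ) ^ m)⁻¹ * R N) atTop (nhds 0) := by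
    apply squeeze_zero_norm'
      (a := fun N : ℕ => (1 - ((N.descFactorial m : ℝ)) / (N : ℝ) ^ m) * K)
    · filter_upwards [eventually_ge_atTop 1] with N hN
      have hNpos : (0 : ℝ) < (N : ℝ) ^ m := by positivity
      rw [norm_mul, norm_inv, norm_pow, Complex.norm_natCast]
      have hb := hR2 N
      have hdle : N.descFactorial m ≤ N ^ m := Nat.descFactorial_le_pow N m
      have hcast : ((N ^ m - N.descFactorial m : ℕ) : ℝ)
          = (N : ℝ) ^ m - (N.descFactorial m : ℝ) := by
        rw [Nat.cast_sub hdle]; push_cast; ring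
      rw [hcast] at hb
      calc ((N : ℝ) ^ m)⁻¹ * ‖R N‖
          ≤ ((N : ℝ) ^ m)⁻¹ * (((N : ℝ) ^ m - (N.descFactorial m : ℝ)) * K) := by
            apply mul_le_mul_of_nonneg_left _ (by positivity)
            calc ‖R N‖ ≤ ((N : ℝ) ^ m - (N.descFactorial m : ℝ)) * 2 ^ (2 * m + 1)
                * σ ^ (2 * m) := hb
              _ = ((N : ℝ) ^ m - (N.descFactorial m : ℝ)) * K := by rw [hK]; ring
        _ = (1 - ((N.descFactorial m : ℝ)) / (N : ℝ) ^ m) * K := by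
            field_simp
    · have : Tendsto (fun N : ℕ => (1 - ((N.descFactorial m : ℝ)) / (N : ℝ) ^ m) * K)
          atTop (nhds ((1 - 1) * K)) :=
        (tendsto_const_nhds.sub hreal).mul_const K
      simpa using this
  have h3 : Tendsto (fun N : ℕ =>
      ((N.descFactorial m : ℂ)) / (N : ℂ) ^ m * C + ((N : ℂ) ^ m)⁻¹ * R N) atTop
      (nhds (1 * C + 0)) := (h1.mul_const C).add h2
  rw [one_mul, add_zero] at h3
  apply h3.congr
  intro N
  rw [hR1 N]
  ring
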